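/- The π-bisimilarity is contained in the absolute equality: ≃_π ⊆ =_π, i.e., every pair of π-bisimilar π-processes is absolutely equal. -/

import Mathlib

set_option linter.unusedVariables false

/-! Core formalization of the π-calculus with name dichotomy.
Names are natural numbers; name variables are natural numbers (kept disjoint
via the sum-like type `NV`). -/

abbrev Name := ℕ

/-- Names and name variables. -/
inductive NV : Type
  | nm : Name → NV
  | vr : ℕ → NV
  deriving DecidableEq

/-- π-terms.  Input and output choices have a finite index set `Fin k`. -/
inductive Term : Type
  | nil : Term
  | inp : NV → ℕ → (k : ℕ) → (Fin k → Term) → Term          -- Σ_{i∈I} n(x).T_i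
  | out : NV → (k : ℕ) → (Fin k → NV) → (Fin k → Term) → Term -- Σ_{i∈I} n̄ m_i.T_i
  | par : Term → Term → Term
  | res : Name → Term → Term
  | mat : NV → NV → Term → Term
  | mis : NV → NV → Term → Term
  | repInp : NV → ℕ → Term → Term                             -- !n(x).T
  | repOut : NV → NV → Term → Term                            -- !n̄m.T

namespace NV

/-- Apply a map on variables. -/
def sub (σ : ℕ → NV) : NV → NV
  | nm a => nm a
  | vr x => σ x

/-- Apply a map on names. -/
def ren (α : Name → Name) : NV → NV
  | nm a => nm (α a)
  | vr x => vr x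

def vars : NV → Set ℕ
  | nm _ => ∅
  | vr x => {x}

def names : NV → Set Name
  | nm a => {a}
  | vr _ => ∅

end NV

namespace Term

/-- Apply a substitution (a map from name variables to names-or-variables),
    not substituting bound occurrences. -/
def applyVar (σ : ℕ → NV) : Term → Term
  | nil => nil
  | inp n x k Ts => inp (n.sub σ) x k (fun i => (Ts i).applyVar (Function.update σ x (NV.vr x)))
  | out n k ms Ts => out (n.sub σ) k (fun i => (ms i).sub σ) (fun i => (Ts i).applyVar σ)
  | par S T => par (S.applyVar σ) (T.applyVar σ)
  | res c T => res c (T.applyVar σ)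
  | mat p q T => mat (p.sub σ) (q.sub σ) (T.applyVar σ)
  | mis p q T => mis (p.sub σ) (q.sub σ) (T.applyVar σ)
  | repInp n x T => repInp (n.sub σ) x (T.applyVar (Function.update σ x (NV.vr x)))
  | repOut n m T => repOut (n.sub σ) (m.sub σ) (T.applyVar σ)

/-- Substitute the single name `c` for the name variable `x`: `T{c/x}`. -/
def subst1 (x : ℕ) (c : Name) (T : Term) : Term :=
  T.applyVar (fun y => if y = x then NV.nm c else NV.vr y)

/-- Apply an assignment (a total map from name variables to names). -/
def assign (ρ : ℕ → Name) (T : Term) : Term :=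
  T.applyVar (fun x => NV.nm (ρ x))

/-- Apply a renaming to all names of a term. -/
def applyName (α : Name → Name) : Term → Term
  | nil => nil
  | inp n x k Ts => inp (n.ren α) x k (fun i => (Ts i).applyName α)
  | out n k ms Ts => out (n.ren α) k (fun i => (ms i).ren α) (fun i => (Ts i).applyName α)
  | par S T => par (S.applyName α) (T.applyName α)
  | res c T => res (α c) (T.applyName α)
  | mat p q T => mat (p.ren α) (q.ren α) (T.applyName α)
  | mis p q T => mis (p.ren α) (q.ren α) (T.applyName α)
  | repInp n x T => repInp (n.ren α) x (T.applyName α)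
  | repOut n m T => repOut (n.ren α) (m.ren α) (T.applyName α)

/-- Free name variables. -/
def fvar : Term → Set ℕ
  | nil => ∅
  | inp n x k Ts => n.vars ∪ ((⋃ i, (Ts i).fvar) \ {x})
  | out n k ms Ts => n.vars ∪ (⋃ i, (ms i).vars ∪ (Ts i).fvar)
  | par S T => S.fvar ∪ T.fvar
  | res _ T => T.fvar
  | mat p q T => p.vars ∪ q.vars ∪ T.fvar
  | mis p q T => p.vars ∪ q.vars ∪ T.fvar
  | repInp n x T => n.vars ∪ (T.fvar \ {x})
  | repOut n m T => n.vars ∪ m.vars ∪ T.fvar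

/-- Global (non-local) names. -/
def gname : Term → Set Name
  | nil => ∅
  | inp n _ k Ts => n.names ∪ (⋃ i, (Ts i).gname)
  | out n k ms Ts => n.names ∪ (⋃ i, (ms i).names ∪ (Ts i).gname)
  | par S T => S.gname ∪ T.gname
  | res c T => T.gname \ {c}
  | mat p q T => p.names ∪ q.names ∪ T.gname
  | mis p q T => p.names ∪ q.names ∪ T.gname
  | repInp n _ T => n.names ∪ T.gname
  | repOut n m T => n.names ∪ m.names ∪ T.gname

end Term

/-- A π-process is a closed π-term. -/
def Closed (P : Term) : Prop := P.fvar = ∅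

def IsProc (P : Term) : Prop := Closed P

/-- Labels (external actions). -/
inductive Label : Type
  | inp : Name → Name → Label      -- ab
  | out : Name → Name → Label      -- āb
  | bout : Name → Name → Label     -- ā(c)
  deriving DecidableEq

def Label.names : Label → Set Name
  | .inp a b => {a, b}
  | .out a b => {a, b}
  | .bout a c => {a, c}

def Label.ren (α : Name → Name) : Label → Label
  | .inp a b => .inp (α a) (α b)
  | .out a b => .out (α a) (α b)
  | .bout a c => .bout (α a) (α c)

/-- Actions: internal action τ or a label. -/
inductive Act : Type
  | tau : Act
  | lab : Label → Act

def Act.names : Act → Set Name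
  | .tau => ∅
  | .lab ℓ => ℓ.names

def Act.ren (α : Name → Name) : Act → Act
  | .tau => .tau
  | .lab ℓ => .lab (ℓ.ren α)

/-- The labelled transition system of the π-calculus. -/
inductive Step : Term → Act → Term → Prop
  | inp {a : Name} {x : ℕ} {k : ℕ} {Ts : Fin k → Term} (i : Fin k) (c : Name) :
      Step (.inp (.nm a) x k Ts) (.lab (.inp a c)) ((Ts i).subst1 x c)
  | out {a : Name} {k : ℕ} {ms : Fin k → NV} {Ts : Fin k → Term} (i : Fin k) {c : Name}
      (h : ms i = .nm c) :
      Step (.out (.nm a) k ms Ts) (.lab (.out a c)) (Ts i)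
  | parR {S T T' : Term} {μ : Act} :
      Step T μ T' → Step (.par S T) μ (.par S T')
  | parL {S S' T : Term} {μ : Act} :
      Step S μ S' → Step (.par S T) μ (.par S' T)
  | commL {S S' T T' : Term} {a b : Name} :
      Step S (.lab (.inp a b)) S' → Step T (.lab (.out a b)) T' →
      Step (.par S T) .tau (.par S' T')
  | commR {S S' T T' : Term} {a b : Name} :
      Step S (.lab (.out a b)) S' → Step T (.lab (.inp a b)) T' →
      Step (.par S T) .tau (.par S' T')
  | closeL {S S' T T' : Term} {a c : Name} :
      Step S (.lab (.inp a c)) S' → Step T (.lab (.bout a c)) T' →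
      Step (.par S T) .tau (.res c (.par S' T'))
  | closeR {S S' T T' : Term} {a c : Name} :
      Step S (.lab (.bout a c)) S' → Step T (.lab (.inp a c)) T' →
      Step (.par S T) .tau (.res c (.par S' T'))
  | open_ {T T' : Term} {a c : Name} :
      Step T (.lab (.out a c)) T' → Step (.res c T) (.lab (.bout a c)) T'
  | resStep {T T' : Term} {μ : Act} {c : Name} :
      Step T μ T' → c ∉ μ.names → Step (.res c T) μ (.res c T')
  | matStep {T T' : Term} {μ : Act} {a : Name} :
      Step T μ T' → Step (.mat (.nm a) (.nm a) T) μ T'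
  | misStep {T T' : Term} {μ : Act} {a b : Name} :
      a ≠ b → Step T μ T' → Step (.mis (.nm a) (.nm b) T) μ T'
  | repOutStep {a b : Name} {T : Term} :
      Step (.repOut (.nm a) (.nm b) T) (.lab (.out a b)) (.par T (.repOut (.nm a) (.nm b) T))
  | repInpStep {a : Name} {x : ℕ} {T : Term} (b : Name) :
      Step (.repInp (.nm a) x T) (.lab (.inp a b)) (.par (T.subst1 x b) (.repInp (.nm a) x T))

/-- Internal action. -/
def Tau (P Q : Term) : Prop := Step P .tau Q

/-- `P ⟹ Q` : reflexive and transitive closure of τ. -/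
def WeakTau : Term → Term → Prop := Relation.ReflTransGen Tau

/-- `P ⇓` : observability. -/
def Obs (P : Term) : Prop := ∃ P' ℓ P'', WeakTau P P' ∧ Step P' (.lab ℓ) P''

abbrev PRel : Type := Term → Term → Prop

def OnProc (R : PRel) : Prop := ∀ P Q, R P Q → IsProc P ∧ IsProc Q

def ReflProc (R : PRel) : Prop := ∀ P, IsProc P → R P P

def Equipollent (R : PRel) : Prop := ∀ P Q, R P Q → (Obs P ↔ Obs Q)

def Extensional (R : PRel) : Prop :=
  (∀ L M P Q, R L M → R P Q → R (.par L P) (.par M Q)) ∧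
  (∀ P Q c, R P Q → R (.res c P) (.res c Q))

/-- An infinite τ-sequence. -/
def TauSeq (f : ℕ → Term) : Prop := ∀ n, Tau (f n) (f (n + 1))

/-- `P —τ→⟹ P'`. -/
def TauWeak (P P' : Term) : Prop := ∃ P₀, Tau P P₀ ∧ WeakTau P₀ P'

def Codivergent (R : PRel) : Prop := ∀ P Q, R P Q →
  ((∀ f : ℕ → Term, f 0 = Q → TauSeq f →
      ∃ k, 1 ≤ k ∧ ∃ P', TauWeak P P' ∧ R P' (f k)) ∧
   (∀ f : ℕ → Term, f 0 = P → TauSeq f →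
      ∃ k, 1 ≤ k ∧ ∃ Q', TauWeak Q Q' ∧ R Q' (f k)))

/-- Branching-style bisimulation. -/
def Bisim (R : PRel) : Prop := ∀ P Q, R P Q →
  ((∀ Q', Tau Q Q' →
      (∃ P', WeakTau P P' ∧ R P' Q ∧ R P' Q') ∨
      (∃ P'' P', WeakTau P P'' ∧ R P'' Q ∧ Tau P'' P' ∧ R P' Q')) ∧
   (∀ P', Tau P P' →
      (∃ Q', WeakTau Q Q' ∧ R P Q' ∧ R P' Q') ∨
      (∃ Q'' Q', WeakTau Q Q'' ∧ R P Q'' ∧ Tau Q'' Q' ∧ R P' Q')))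

/-- A relation qualifying for the absolute equality. -/
def GoodAbs (R : PRel) : Prop :=
  OnProc R ∧ ReflProc R ∧ Equipollent R ∧ Extensional R ∧ Codivergent R ∧ Bisim R

/-- The absolute equality: the largest reflexive, equipollent, extensional,
codivergent bisimulation on π-processes. -/
def AbsEq (P Q : Term) : Prop := ∃ R : PRel, GoodAbs R ∧ R P Q

/-- A π-bisimulation: a codivergent (branching) bisimulation on π-processes in
which external actions are explicitly simulated in the branching style. -/
def PiBisimGood (R : PRel) : Prop :=
  OnProc R ∧ Codivergent R ∧ Bisim R ∧
  (∀ P Q, R P Q →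
    ((∀ ℓ Q', Step Q (.lab ℓ) Q' →
        ∃ P'' P', WeakTau P P'' ∧ Step P'' (.lab ℓ) P' ∧ R P'' Q ∧ R P' Q') ∧
     (∀ ℓ P', Step P (.lab ℓ) P' →
        ∃ Q'' Q', WeakTau Q Q'' ∧ Step Q'' (.lab ℓ) Q' ∧ R P Q'' ∧ R P' Q')))

/-- The π-bisimilarity ≃_π : the largest π-bisimulation. -/
def PiBisimilar (P Q : Term) : Prop := ∃ R : PRel, PiBisimGood R ∧ R P Q

/-- Extension of ≃_π to open π-terms by closure under assignments. -/
def PiBisimilarOpen (S T : Term) : Prop :=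
  ∀ ρ : ℕ → Name, PiBisimilar (S.assign ρ) (T.assign ρ)


/-! ### Auxiliary development -/

open Relation

section Aux

/-! Basic lemmas about weak transitions. -/

lemma weakTau_refl (P : Term) : WeakTau P P := ReflTransGen.refl

lemma weakTau_trans {P Q R : Term} (h1 : WeakTau P Q) (h2 : WeakTau Q R) : WeakTau P R :=
  ReflTransGen.trans h1 h2

lemma weakTau_single {P Q : Term} (h : Tau P Q) : WeakTau P Q := ReflTransGen.single h

lemma weakTau_parL {L L' P : Term} (h : WeakTau L L') : WeakTau (.par L P) (.par L' P) := by
  induction h with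
  | refl => exact ReflTransGen.refl
  | tail _ hstep ih => exact ReflTransGen.tail ih (Step.parL hstep)

lemma weakTau_parR {L P P' : Term} (h : WeakTau P P') : WeakTau (.par L P) (.par L P') := by
  induction h with
  | refl => exact ReflTransGen.refl
  | tail _ hstep ih => exact ReflTransGen.tail ih (Step.parR hstep)

lemma weakTau_par {L L' P P' : Term} (h1 : WeakTau L L') (h2 : WeakTau P P') :
    WeakTau (.par L P) (.par L' P') :=
  weakTau_trans (weakTau_parL h1) (weakTau_parR h2)

lemma weakTau_res {P P' : Term} (c : Name) (h : WeakTau P P') :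
    WeakTau (.res c P) (.res c P') := by
  induction h with
  | refl => exact ReflTransGen.refl
  | tail _ hstep ih =>
      exact ReflTransGen.tail ih (Step.resStep hstep (by simp [Act.names]))

lemma tauWeak_of_weak_tau {A B C : Term} (h1 : WeakTau A B) (h2 : Tau B C) : TauWeak A C := by
  rcases (ReflTransGen.cases_head h1) with rfl | ⟨B0, hB0, hrest⟩
  · exact ⟨C, h2, ReflTransGen.refl⟩
  · exact ⟨B0, hB0, ReflTransGen.tail hrest h2⟩

lemma tauWeak_weak {A B C : Term} (h1 : TauWeak A B) (h2 : WeakTau B C) : TauWeak A C := by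
  obtain ⟨A0, h0, hw⟩ := h1
  exact ⟨A0, h0, weakTau_trans hw h2⟩

lemma tauWeak_parL {L L' P P' : Term} (h : TauWeak L L') (h2 : WeakTau P P') :
    TauWeak (.par L P) (.par L' P') := by
  obtain ⟨L0, h0, hw⟩ := h
  exact ⟨.par L0 P, Step.parL h0, weakTau_par hw h2⟩

lemma tauWeak_parR {L L' P P' : Term} (h : WeakTau L L') (h2 : TauWeak P P') :
    TauWeak (.par L P) (.par L' P') := by
  obtain ⟨P0, h0, hw⟩ := h2
  exact ⟨.par L P0, Step.parR h0, weakTau_par h hw⟩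

lemma tauWeak_res {P P' : Term} (c : Name) (h : TauWeak P P') :
    TauWeak (.res c P) (.res c P') := by
  obtain ⟨P0, h0, hw⟩ := h
  exact ⟨.res c P0, Step.resStep h0 (by simp [Act.names]), weakTau_res c hw⟩

/-! ### Closedness is preserved by transitions. -/

lemma fvar_applyVar (T : Term) : ∀ σ : ℕ → NV,
    (T.applyVar σ).fvar ⊆ ⋃ x ∈ T.fvar, (σ x).vars := by
  induction T with
  | nil => intro σ; simp [Term.applyVar, Term.fvar]
  | inp n x k Ts ih =>
      intro σ y hy
      simp only [Term.applyVar, Term.fvar, Set.mem_union, Set.mem_diff, Set.mem_iUnion,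
        Set.mem_singleton_iff] at hy
      rcases hy with hy | ⟨⟨i, hy⟩, hyx⟩
      · cases n with
        | nm a => simp [NV.sub, NV.vars] at hy
        | vr z =>
            simp only [NV.sub, NV.vars] at hy ⊢
            exact Set.mem_biUnion (by simp [Term.fvar, NV.vars]) hy
      · have := ih i (Function.update σ x (NV.vr x)) hy
        simp only [Set.mem_iUnion] at this
        obtain ⟨z, hz, hmem⟩ := this
        by_cases hzx : z = x
        · subst hzx; simp [Function.update, NV.vars] at hmem; exact absurd hmem hyx
        · rw [Function.update_of_ne hzx] at hmem
          refine Set.mem_biUnion ?_ hmem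
          simp only [Term.fvar, Set.mem_union, Set.mem_diff, Set.mem_iUnion,
            Set.mem_singleton_iff]
          exact Or.inr ⟨⟨i, hz⟩, hzx⟩
  | out n k ms Ts ih =>
      intro σ y hy
      simp only [Term.applyVar, Term.fvar, Set.mem_union, Set.mem_iUnion] at hy
      rcases hy with hy | ⟨i, hy⟩
      · cases n with
        | nm a => simp [NV.sub, NV.vars] at hy
        | vr z =>
            simp only [NV.sub] at hy
            exact Set.mem_biUnion (by simp [Term.fvar, NV.vars]) hy
      · rcases hy with hy | hy
        · cases hms : ms i with
          | nm a => rw [hms] at hy; simp [NV.sub, NV.vars] at hy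
          | vr z =>
              rw [hms] at hy; simp only [NV.sub] at hy
              refine Set.mem_biUnion ?_ hy
              simp only [Term.fvar, Set.mem_union, Set.mem_iUnion]
              exact Or.inr ⟨i, Or.inl (by simp [hms, NV.vars])⟩
        · have := ih i σ hy
          simp only [Set.mem_iUnion] at this
          obtain ⟨z, hz, hmem⟩ := this
          refine Set.mem_biUnion ?_ hmem
          simp only [Term.fvar, Set.mem_union, Set.mem_iUnion]
          exact Or.inr ⟨i, Or.inr hz⟩
  | par S T ihS ihT =>
      intro σ y hy
      simp only [Term.applyVar, Term.fvar, Set.mem_union] at hy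
      rcases hy with hy | hy
      · have := ihS σ hy
        simp only [Set.mem_iUnion] at this
        obtain ⟨z, hz, hmem⟩ := this
        exact Set.mem_biUnion (by simp [Term.fvar]; exact Or.inl hz) hmem
      · have := ihT σ hy
        simp only [Set.mem_iUnion] at this
        obtain ⟨z, hz, hmem⟩ := this
        exact Set.mem_biUnion (by simp [Term.fvar]; exact Or.inr hz) hmem
  | res c T ih =>
      intro σ y hy
      simp only [Term.applyVar, Term.fvar] at hy ⊢
      exact ih σ hy
  | mat p q T ih =>
      intro σ y hy
      simp only [Term.applyVar, Term.fvar, Set.mem_union] at hy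
      rcases hy with (hy | hy) | hy
      · cases p with
        | nm a => simp [NV.sub, NV.vars] at hy
        | vr z =>
            simp only [NV.sub] at hy
            exact Set.mem_biUnion (by simp [Term.fvar, NV.vars]) hy
      · cases q with
        | nm a => simp [NV.sub, NV.vars] at hy
        | vr z =>
            simp only [NV.sub] at hy
            exact Set.mem_biUnion (by simp [Term.fvar, NV.vars]) hy
      · have := ih σ hy
        simp only [Set.mem_iUnion] at this
        obtain ⟨z, hz, hmem⟩ := this
        exact Set.mem_biUnion (by simp [Term.fvar]; tauto) hmem
  | mis p q T ih =>
      intro σ y hy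
      simp only [Term.applyVar, Term.fvar, Set.mem_union] at hy
      rcases hy with (hy | hy) | hy
      · cases p with
        | nm a => simp [NV.sub, NV.vars] at hy
        | vr z =>
            simp only [NV.sub] at hy
            exact Set.mem_biUnion (by simp [Term.fvar, NV.vars]) hy
      · cases q with
        | nm a => simp [NV.sub, NV.vars] at hy
        | vr z =>
            simp only [NV.sub] at hy
            exact Set.mem_biUnion (by simp [Term.fvar, NV.vars]) hy
      · have := ih σ hy
        simp only [Set.mem_iUnion] at this
        obtain ⟨z, hz, hmem⟩ := this
        exact Set.mem_biUnion (by simp [Term.fvar]; tauto) hmem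
  | repInp n x T ih =>
      intro σ y hy
      simp only [Term.applyVar, Term.fvar, Set.mem_union, Set.mem_diff,
        Set.mem_singleton_iff] at hy
      rcases hy with hy | ⟨hy, hyx⟩
      · cases n with
        | nm a => simp [NV.sub, NV.vars] at hy
        | vr z =>
            simp only [NV.sub] at hy
            exact Set.mem_biUnion (by simp [Term.fvar, NV.vars]) hy
      · have := ih (Function.update σ x (NV.vr x)) hy
        simp only [Set.mem_iUnion] at this
        obtain ⟨z, hz, hmem⟩ := this
        by_cases hzx : z = x
        · subst hzx; simp [Function.update, NV.vars] at hmem; exact absurd hmem hyx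
        · rw [Function.update_of_ne hzx] at hmem
          refine Set.mem_biUnion ?_ hmem
          simp only [Term.fvar, Set.mem_union, Set.mem_diff, Set.mem_singleton_iff]
          exact Or.inr ⟨hz, hzx⟩
  | repOut n m T ih =>
      intro σ y hy
      simp only [Term.applyVar, Term.fvar, Set.mem_union] at hy
      rcases hy with (hy | hy) | hy
      · cases n with
        | nm a => simp [NV.sub, NV.vars] at hy
        | vr z =>
            simp only [NV.sub] at hy
            exact Set.mem_biUnion (by simp [Term.fvar, NV.vars]) hy
      · cases m with
        | nm a => simp [NV.sub, NV.vars] at hy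
        | vr z =>
            simp only [NV.sub] at hy
            exact Set.mem_biUnion (by simp [Term.fvar, NV.vars]) hy
      · have := ih σ hy
        simp only [Set.mem_iUnion] at this
        obtain ⟨z, hz, hmem⟩ := this
        exact Set.mem_biUnion (by simp [Term.fvar]; tauto) hmem

lemma closed_subst1 {T : Term} {x : ℕ} {c : Name} (h : T.fvar ⊆ {x}) :
    Closed (T.subst1 x c) := by
  have := fvar_applyVar T (fun y => if y = x then NV.nm c else NV.vr y)
  rw [Closed, Term.subst1, Set.eq_empty_iff_forall_notMem]
  intro y hy
  have hm := this hy
  simp only [Set.mem_iUnion] at hm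
  obtain ⟨z, hz, hmem⟩ := hm
  have : z = x := h hz
  subst this
  simp [NV.vars] at hmem

lemma step_closed : ∀ {T : Term} {μ : Act} {T' : Term}, Step T μ T' → Closed T → Closed T' := by
  intro T μ T' hstep
  induction hstep with
  | inp i c =>
      intro hcl
      simp only [Closed, Term.fvar, Set.union_empty_iff] at hcl
      apply closed_subst1
      intro y hy
      by_contra hne
      have : y ∈ (⋃ i, Term.fvar _) \ ({_} : Set ℕ) := ⟨Set.mem_iUnion.2 ⟨i, hy⟩, hne⟩
      rw [hcl.2] at this; exact this
  | @out a k ms Ts i c h =>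
      intro hcl
      simp only [Closed, Term.fvar, Set.union_empty_iff] at hcl
      rw [Closed, Set.eq_empty_iff_forall_notMem]
      intro y hy
      have hmem : y ∈ (⋃ i, (ms i).vars ∪ (Ts i).fvar) :=
        Set.mem_iUnion.2 ⟨i, Set.mem_union_right _ hy⟩
      rw [hcl.2] at hmem; exact hmem
  | parR _ ih =>
      intro hcl
      simp only [Closed, Term.fvar, Set.union_empty_iff] at hcl ⊢
      exact ⟨hcl.1, ih hcl.2⟩
  | parL _ ih =>
      intro hcl
      simp only [Closed, Term.fvar, Set.union_empty_iff] at hcl ⊢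
      exact ⟨ih hcl.1, hcl.2⟩
  | commL _ _ ih1 ih2 =>
      intro hcl
      simp only [Closed, Term.fvar, Set.union_empty_iff] at hcl ⊢
      exact ⟨ih1 hcl.1, ih2 hcl.2⟩
  | commR _ _ ih1 ih2 =>
      intro hcl
      simp only [Closed, Term.fvar, Set.union_empty_iff] at hcl ⊢
      exact ⟨ih1 hcl.1, ih2 hcl.2⟩
  | closeL _ _ ih1 ih2 =>
      intro hcl
      simp only [Closed, Term.fvar, Set.union_empty_iff] at hcl ⊢
      exact ⟨ih1 hcl.1, ih2 hcl.2⟩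
  | closeR _ _ ih1 ih2 =>
      intro hcl
      simp only [Closed, Term.fvar, Set.union_empty_iff] at hcl ⊢
      exact ⟨ih1 hcl.1, ih2 hcl.2⟩
  | open_ _ ih =>
      intro hcl
      simp only [Closed, Term.fvar] at hcl ⊢
      exact ih hcl
  | resStep _ _ ih =>
      intro hcl
      simp only [Closed, Term.fvar] at hcl ⊢
      rw [ih hcl]
  | matStep _ ih =>
      intro hcl
      simp only [Closed, Term.fvar, Set.union_empty_iff] at hcl
      exact ih hcl.2
  | misStep _ _ ih =>
      intro hcl
      simp only [Closed, Term.fvar, Set.union_empty_iff] at hcl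
      exact ih hcl.2
  | repOutStep =>
      intro hcl
      simp only [Closed, Term.fvar, Set.union_empty_iff, NV.vars] at hcl ⊢
      tauto
  | repInpStep b =>
      intro hcl
      simp only [Closed, Term.fvar, Set.union_empty_iff] at hcl ⊢
      constructor
      · apply closed_subst1
        intro y hy
        by_contra hne
        have : y ∈ Term.fvar _ \ ({_} : Set ℕ) := ⟨hy, hne⟩
        rw [hcl.2] at this; exact this
      · simp [NV.vars, hcl.2]

lemma weakTau_closed {P Q : Term} (h : WeakTau P Q) (hc : Closed P) : Closed Q := by
  induction h with
  | refl => exact hc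
  | tail _ hstep ih => exact step_closed hstep ih

end Aux


section Main

/-- π-bisimilarity is itself a π-bisimulation. -/
lemma piBisimilar_good : PiBisimGood PiBisimilar := by
  refine ⟨?_, ?_, ?_, ?_⟩
  · rintro P Q ⟨R, hR, hPQ⟩
    exact hR.1 P Q hPQ
  · rintro P Q ⟨R, hR, hPQ⟩
    obtain ⟨h1, h2⟩ := hR.2.1 P Q hPQ
    constructor
    · intro f hf0 hfs
      obtain ⟨k, hk, P', hP', hrel⟩ := h1 f hf0 hfs
      exact ⟨k, hk, P', hP', R, hR, hrel⟩
    · intro f hf0 hfs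
      obtain ⟨k, hk, Q', hQ', hrel⟩ := h2 f hf0 hfs
      exact ⟨k, hk, Q', hQ', R, hR, hrel⟩
  · rintro P Q ⟨R, hR, hPQ⟩
    obtain ⟨h1, h2⟩ := hR.2.2.1 P Q hPQ
    constructor
    · intro Q' hQ'
      rcases h1 Q' hQ' with ⟨P', hw, r1, r2⟩ | ⟨P'', P', hw, r1, ht, r2⟩
      · exact Or.inl ⟨P', hw, ⟨R, hR, r1⟩, ⟨R, hR, r2⟩⟩
      · exact Or.inr ⟨P'', P', hw, ⟨R, hR, r1⟩, ht, ⟨R, hR, r2⟩⟩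
    · intro P' hP'
      rcases h2 P' hP' with ⟨Q', hw, r1, r2⟩ | ⟨Q'', Q', hw, r1, ht, r2⟩
      · exact Or.inl ⟨Q', hw, ⟨R, hR, r1⟩, ⟨R, hR, r2⟩⟩
      · exact Or.inr ⟨Q'', Q', hw, ⟨R, hR, r1⟩, ht, ⟨R, hR, r2⟩⟩
  · rintro P Q ⟨R, hR, hPQ⟩
    obtain ⟨h1, h2⟩ := hR.2.2.2 P Q hPQ
    constructor
    · intro ℓ Q' hQ'
      obtain ⟨P'', P', hw, hs, r1, r2⟩ := h1 ℓ Q' hQ'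
      exact ⟨P'', P', hw, hs, ⟨R, hR, r1⟩, ⟨R, hR, r2⟩⟩
    · intro ℓ P' hP'
      obtain ⟨Q'', Q', hw, hs, r1, r2⟩ := h2 ℓ P' hP'
      exact ⟨Q'', Q', hw, hs, ⟨R, hR, r1⟩, ⟨R, hR, r2⟩⟩

lemma piBisimilar_symm {P Q : Term} (h : PiBisimilar P Q) : PiBisimilar Q P := by
  obtain ⟨R, hR, hPQ⟩ := h
  set S : PRel := fun a b => R a b ∨ R b a with hS
  have hSmem : ∀ a b, R a b → S a b := fun a b hab => Or.inl hab
  refine ⟨S, ⟨?_, ?_, ?_, ?_⟩, Or.inr hPQ⟩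
  · rintro A B (hAB | hAB)
    · exact hR.1 A B hAB
    · exact (hR.1 B A hAB).symm
  · rintro A B (hAB | hAB)
    · obtain ⟨h1, h2⟩ := hR.2.1 A B hAB
      constructor
      · intro f hf0 hfs
        obtain ⟨k, hk, P', hP', hrel⟩ := h1 f hf0 hfs
        exact ⟨k, hk, P', hP', Or.inl hrel⟩
      · intro f hf0 hfs
        obtain ⟨k, hk, Q', hQ', hrel⟩ := h2 f hf0 hfs
        exact ⟨k, hk, Q', hQ', Or.inl hrel⟩
    · obtain ⟨h1, h2⟩ := hR.2.1 B A hAB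
      constructor
      · intro f hf0 hfs
        obtain ⟨k, hk, P', hP', hrel⟩ := h2 f hf0 hfs
        exact ⟨k, hk, P', hP', Or.inl hrel⟩
      · intro f hf0 hfs
        obtain ⟨k, hk, Q', hQ', hrel⟩ := h1 f hf0 hfs
        exact ⟨k, hk, Q', hQ', Or.inl hrel⟩
  · rintro A B (hAB | hAB)
    · obtain ⟨h1, h2⟩ := hR.2.2.1 A B hAB
      constructor
      · intro Q' hQ'
        rcases h1 Q' hQ' with ⟨P', hw, r1, r2⟩ | ⟨P'', P', hw, r1, ht, r2⟩
        · exact Or.inl ⟨P', hw, Or.inl r1, Or.inl r2⟩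
        · exact Or.inr ⟨P'', P', hw, Or.inl r1, ht, Or.inl r2⟩
      · intro P' hP'
        rcases h2 P' hP' with ⟨Q', hw, r1, r2⟩ | ⟨Q'', Q', hw, r1, ht, r2⟩
        · exact Or.inl ⟨Q', hw, Or.inl r1, Or.inl r2⟩
        · exact Or.inr ⟨Q'', Q', hw, Or.inl r1, ht, Or.inl r2⟩
    · obtain ⟨h1, h2⟩ := hR.2.2.1 B A hAB
      constructor
      · intro Q' hQ'
        rcases h2 Q' hQ' with ⟨P', hw, r1, r2⟩ | ⟨P'', P', hw, r1, ht, r2⟩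
        · exact Or.inl ⟨P', hw, Or.inr r1, Or.inr r2⟩
        · exact Or.inr ⟨P'', P', hw, Or.inr r1, ht, Or.inr r2⟩
      · intro P' hP'
        rcases h1 P' hP' with ⟨Q', hw, r1, r2⟩ | ⟨Q'', Q', hw, r1, ht, r2⟩
        · exact Or.inl ⟨Q', hw, Or.inr r1, Or.inr r2⟩
        · exact Or.inr ⟨Q'', Q', hw, Or.inr r1, ht, Or.inr r2⟩
  · rintro A B (hAB | hAB)
    · obtain ⟨h1, h2⟩ := hR.2.2.2 A B hAB
      constructor
      · intro ℓ Q' hQ'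
        obtain ⟨P'', P', hw, hs, r1, r2⟩ := h1 ℓ Q' hQ'
        exact ⟨P'', P', hw, hs, Or.inl r1, Or.inl r2⟩
      · intro ℓ P' hP'
        obtain ⟨Q'', Q', hw, hs, r1, r2⟩ := h2 ℓ P' hP'
        exact ⟨Q'', Q', hw, hs, Or.inl r1, Or.inl r2⟩
    · obtain ⟨h1, h2⟩ := hR.2.2.2 B A hAB
      constructor
      · intro ℓ Q' hQ'
        obtain ⟨P'', P', hw, hs, r1, r2⟩ := h2 ℓ Q' hQ'
        exact ⟨P'', P', hw, hs, Or.inr r1, Or.inr r2⟩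
      · intro ℓ P' hP'
        obtain ⟨Q'', Q', hw, hs, r1, r2⟩ := h1 ℓ P' hP'
        exact ⟨Q'', Q', hw, hs, Or.inr r1, Or.inr r2⟩

/-- The closure of π-bisimilarity under identity, parallel composition and
restriction. -/
inductive Cl : Term → Term → Prop
  | base {P Q : Term} : PiBisimilar P Q → Cl P Q
  | rfl {P : Term} : IsProc P → Cl P P
  | par {L M P Q : Term} : Cl L M → Cl P Q → Cl (.par L P) (.par M Q)
  | res {P Q : Term} (c : Name) : Cl P Q → Cl (.res c P) (.res c Q)

lemma cl_symm : ∀ {P Q : Term}, Cl P Q → Cl Q P := by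
  intro P Q h
  induction h with
  | base h => exact Cl.base (piBisimilar_symm h)
  | rfl h => exact Cl.rfl h
  | par _ _ ih1 ih2 => exact Cl.par ih1 ih2
  | res c _ ih => exact Cl.res c ih

lemma cl_onProc : OnProc Cl := by
  intro P Q h
  induction h with
  | base h => exact piBisimilar_good.1 _ _ h
  | rfl h => exact ⟨h, h⟩
  | par _ _ ih1 ih2 =>
      refine ⟨?_, ?_⟩ <;>
        · simp only [IsProc, Closed, Term.fvar, Set.union_empty_iff]
          first
            | exact ⟨ih1.1, ih2.1⟩
            | exact ⟨ih1.2, ih2.2⟩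
  | res c _ ih =>
      exact ⟨ih.1, ih.2⟩

end Main


section Match

/-- The matching lemma: `Cl` simulates τ-steps in branching style and label
steps strongly. -/
lemma cl_match : ∀ {P Q : Term}, Cl P Q → ∀ μ Q', Step Q μ Q' →
    (μ = .tau →
      (∃ P', WeakTau P P' ∧ Cl P' Q ∧ Cl P' Q') ∨
      (∃ P'' P', WeakTau P P'' ∧ Cl P'' Q ∧ Tau P'' P' ∧ Cl P' Q')) ∧
    (∀ ℓ, μ = .lab ℓ →
      ∃ P'' P', WeakTau P P'' ∧ Step P'' (.lab ℓ) P' ∧ Cl P'' Q ∧ Cl P' Q') := by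
  intro P Q h
  induction h with
  | @base P Q h =>
      intro μ Q' hstep
      constructor
      · rintro rfl
        rcases (piBisimilar_good.2.2.1 P Q h).1 Q' hstep with
          ⟨P', hw, r1, r2⟩ | ⟨P'', P', hw, r1, ht, r2⟩
        · exact Or.inl ⟨P', hw, Cl.base r1, Cl.base r2⟩
        · exact Or.inr ⟨P'', P', hw, Cl.base r1, ht, Cl.base r2⟩
      · rintro ℓ rfl
        obtain ⟨P'', P', hw, hs, r1, r2⟩ := (piBisimilar_good.2.2.2 P Q h).1 ℓ Q' hstep
        exact ⟨P'', P', hw, hs, Cl.base r1, Cl.base r2⟩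
  | @rfl P h =>
      intro μ Q' hstep
      constructor
      · rintro rfl
        exact Or.inr ⟨P, Q', ReflTransGen.refl, Cl.rfl h, hstep, Cl.rfl (step_closed hstep h)⟩
      · rintro ℓ rfl
        exact ⟨P, Q', ReflTransGen.refl, hstep, Cl.rfl h, Cl.rfl (step_closed hstep h)⟩
  | @par L M P Q hLM hPQ ihLM ihPQ =>
      intro μ R' hstep
      cases hstep with
      | parR h =>
          constructor
          · rintro rfl
            rcases (ihPQ _ _ h).1 rfl with ⟨P₁, hw, c1, c2⟩ | ⟨P'', P₁, hw, c1, ht, c2⟩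
            · exact Or.inl ⟨.par L P₁, weakTau_parR hw, Cl.par hLM c1, Cl.par hLM c2⟩
            · exact Or.inr ⟨.par L P'', .par L P₁, weakTau_parR hw, Cl.par hLM c1,
                Step.parR ht, Cl.par hLM c2⟩
          · rintro ℓ rfl
            obtain ⟨P'', P₁, hw, hs, c1, c2⟩ := (ihPQ _ _ h).2 ℓ rfl
            exact ⟨.par L P'', .par L P₁, weakTau_parR hw, Step.parR hs,
              Cl.par hLM c1, Cl.par hLM c2⟩
      | parL h =>
          constructor
          · rintro rfl
            rcases (ihLM _ _ h).1 rfl with ⟨L₁, hw, c1, c2⟩ | ⟨L'', L₁, hw, c1, ht, c2⟩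
            · exact Or.inl ⟨.par L₁ P, weakTau_parL hw, Cl.par c1 hPQ, Cl.par c2 hPQ⟩
            · exact Or.inr ⟨.par L'' P, .par L₁ P, weakTau_parL hw, Cl.par c1 hPQ,
                Step.parL ht, Cl.par c2 hPQ⟩
          · rintro ℓ rfl
            obtain ⟨L'', L₁, hw, hs, c1, c2⟩ := (ihLM _ _ h).2 ℓ rfl
            exact ⟨.par L'' P, .par L₁ P, weakTau_parL hw, Step.parL hs,
              Cl.par c1 hPQ, Cl.par c2 hPQ⟩
      | commL hS hT =>
          constructor
          · intro _
            obtain ⟨L'', L₁, hwL, hsL, cL1, cL2⟩ := (ihLM _ _ hS).2 _ rfl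
            obtain ⟨P'', P₁, hwP, hsP, cP1, cP2⟩ := (ihPQ _ _ hT).2 _ rfl
            exact Or.inr ⟨.par L'' P'', .par L₁ P₁, weakTau_par hwL hwP,
              Cl.par cL1 cP1, Step.commL hsL hsP, Cl.par cL2 cP2⟩
          · rintro ℓ h; cases h
      | commR hS hT =>
          constructor
          · intro _
            obtain ⟨L'', L₁, hwL, hsL, cL1, cL2⟩ := (ihLM _ _ hS).2 _ rfl
            obtain ⟨P'', P₁, hwP, hsP, cP1, cP2⟩ := (ihPQ _ _ hT).2 _ rfl
            exact Or.inr ⟨.par L'' P'', .par L₁ P₁, weakTau_par hwL hwP,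
              Cl.par cL1 cP1, Step.commR hsL hsP, Cl.par cL2 cP2⟩
          · rintro ℓ h; cases h
      | closeL hS hT =>
          constructor
          · intro _
            obtain ⟨L'', L₁, hwL, hsL, cL1, cL2⟩ := (ihLM _ _ hS).2 _ rfl
            obtain ⟨P'', P₁, hwP, hsP, cP1, cP2⟩ := (ihPQ _ _ hT).2 _ rfl
            exact Or.inr ⟨.par L'' P'', .res _ (.par L₁ P₁), weakTau_par hwL hwP,
              Cl.par cL1 cP1, Step.closeL hsL hsP, Cl.res _ (Cl.par cL2 cP2)⟩
          · rintro ℓ h; cases h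
      | closeR hS hT =>
          constructor
          · intro _
            obtain ⟨L'', L₁, hwL, hsL, cL1, cL2⟩ := (ihLM _ _ hS).2 _ rfl
            obtain ⟨P'', P₁, hwP, hsP, cP1, cP2⟩ := (ihPQ _ _ hT).2 _ rfl
            exact Or.inr ⟨.par L'' P'', .res _ (.par L₁ P₁), weakTau_par hwL hwP,
              Cl.par cL1 cP1, Step.closeR hsL hsP, Cl.res _ (Cl.par cL2 cP2)⟩
          · rintro ℓ h; cases h
  | @res P Q c hPQ ih =>
      intro μ R' hstep
      cases hstep with
      | open_ h =>
          constructor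
          · rintro heq; cases heq
          · rintro ℓ heq
            cases heq
            obtain ⟨P'', P₁, hw, hs, c1, c2⟩ := (ih _ _ h).2 _ rfl
            exact ⟨.res c P'', P₁, weakTau_res c hw, Step.open_ hs, Cl.res c c1, c2⟩
      | resStep h hn =>
          constructor
          · rintro rfl
            rcases (ih _ _ h).1 rfl with ⟨P₁, hw, c1, c2⟩ | ⟨P'', P₁, hw, c1, ht, c2⟩
            · exact Or.inl ⟨.res c P₁, weakTau_res c hw, Cl.res c c1, Cl.res c c2⟩
            · exact Or.inr ⟨.res c P'', .res c P₁, weakTau_res c hw, Cl.res c c1,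
                Step.resStep ht hn, Cl.res c c2⟩
          · rintro ℓ rfl
            obtain ⟨P'', P₁, hw, hs, c1, c2⟩ := (ih _ _ h).2 ℓ rfl
            exact ⟨.res c P'', .res c P₁, weakTau_res c hw, Step.resStep hs hn,
              Cl.res c c1, Cl.res c c2⟩

/-- Weak tracking: along a weak τ-sequence of `Q`, `P` can follow weakly. -/
lemma cl_track : ∀ {P Q Q₁ : Term}, Cl P Q → WeakTau Q Q₁ →
    ∃ P₁, WeakTau P P₁ ∧ Cl P₁ Q₁ := by
  intro P Q Q₁ h hw
  induction hw with
  | refl => exact ⟨P, ReflTransGen.refl, h⟩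
  | tail hsteps hstep ih =>
      obtain ⟨P₁, hw₁, hc₁⟩ := ih
      rcases (cl_match hc₁ _ _ hstep).1 rfl with ⟨P₂, hw₂, _, hc₂⟩ | ⟨P'', P₂, hw₂, _, ht, hc₂⟩
      · exact ⟨P₂, weakTau_trans hw₁ hw₂, hc₂⟩
      · exact ⟨P₂, weakTau_trans hw₁ (ReflTransGen.tail hw₂ ht), hc₂⟩

end Match


section Codiv

open scoped Classical

/-- One decomposition step for a τ-transition of a parallel composition. -/
noncomputable def pstep (Z X Y : Term) : Option (Term × Term) :=
  if h : ∃ X', Z = Term.par X' Y ∧ Tau X X' then some (h.choose, Y)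
  else if h2 : ∃ Y', Z = Term.par X Y' ∧ Tau Y Y' then some (X, h2.choose)
  else none

lemma pstep_some {Z X Y X' Y' : Term} (h : pstep Z X Y = some (X', Y')) :
    (Y' = Y ∧ Z = Term.par X' Y ∧ Tau X X') ∨
    (X' = X ∧ Z = Term.par X Y' ∧ Tau Y Y') := by
  rw [pstep] at h
  split_ifs at h with h1 h2
  · obtain ⟨he1, he2⟩ : h1.choose = X' ∧ Y = Y' := by
      constructor <;> [exact congrArg Prod.fst (Option.some.inj h);
        exact congrArg Prod.snd (Option.some.inj h)]
    obtain ⟨hz, ht⟩ := h1.choose_spec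
    exact Or.inl ⟨he2.symm, by subst he1; exact hz, he1 ▸ ht⟩
  · obtain ⟨he1, he2⟩ : X = X' ∧ h2.choose = Y' := by
      constructor <;> [exact congrArg Prod.fst (Option.some.inj h);
        exact congrArg Prod.snd (Option.some.inj h)]
    obtain ⟨hz, ht⟩ := h2.choose_spec
    exact Or.inr ⟨he1.symm, by subst he2; exact hz, he2 ▸ ht⟩

lemma pstep_none {Z X Y : Term} (hz : Tau (.par X Y) Z) (h : pstep Z X Y = none) :
    (∃ a b X' Y', Step X (.lab (.inp a b)) X' ∧ Step Y (.lab (.out a b)) Y' ∧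
        Z = Term.par X' Y') ∨
    (∃ a b X' Y', Step X (.lab (.out a b)) X' ∧ Step Y (.lab (.inp a b)) Y' ∧
        Z = Term.par X' Y') ∨
    (∃ a c X' Y', Step X (.lab (.inp a c)) X' ∧ Step Y (.lab (.bout a c)) Y' ∧
        Z = Term.res c (.par X' Y')) ∨
    (∃ a c X' Y', Step X (.lab (.bout a c)) X' ∧ Step Y (.lab (.inp a c)) Y' ∧
        Z = Term.res c (.par X' Y')) := by
  rw [pstep] at h
  split_ifs at h with h1 h2
  cases hz with
  | parR hs => exact absurd ⟨_, rfl, hs⟩ h2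
  | parL hs => exact absurd ⟨_, rfl, hs⟩ h1
  | commL hS hT => exact Or.inl ⟨_, _, _, _, hS, hT, rfl⟩
  | commR hS hT => exact Or.inr (Or.inl ⟨_, _, _, _, hS, hT, rfl⟩)
  | closeL hS hT => exact Or.inr (Or.inr (Or.inl ⟨_, _, _, _, hS, hT, rfl⟩))
  | closeR hS hT => exact Or.inr (Or.inr (Or.inr ⟨_, _, _, _, hS, hT, rfl⟩))

/-- Iterated decomposition of a τ-sequence of a parallel composition. -/
noncomputable def dseq (f : ℕ → Term) (M Q : Term) : ℕ → Option (Term × Term)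
  | 0 => some (M, Q)
  | n + 1 => (dseq f M Q n).bind fun XY => pstep (f (n + 1)) XY.1 XY.2

lemma dseq_inv {f : ℕ → Term} {M Q : Term} (hf0 : f 0 = .par M Q) (hfs : TauSeq f) :
    ∀ n X Y, dseq f M Q n = some (X, Y) →
      f n = Term.par X Y ∧ WeakTau M X ∧ WeakTau Q Y := by
  intro n
  induction n with
  | zero =>
      intro X Y h
      obtain ⟨h1, h2⟩ : M = X ∧ Q = Y := by
        constructor <;> [exact congrArg Prod.fst (Option.some.inj h);
          exact congrArg Prod.snd (Option.some.inj h)]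
      subst h1; subst h2
      exact ⟨hf0, ReflTransGen.refl, ReflTransGen.refl⟩
  | succ n ih =>
      intro X Y h
      rw [dseq] at h
      obtain ⟨⟨X0, Y0⟩, hd, hp⟩ := Option.bind_eq_some_iff.1 h
      obtain ⟨hfn, hwM, hwQ⟩ := ih X0 Y0 hd
      rcases pstep_some hp with ⟨he, hz, ht⟩ | ⟨he, hz, ht⟩
      · subst he; exact ⟨hz, ReflTransGen.tail hwM ht, hwQ⟩
      · subst he; exact ⟨hz, hwM, ReflTransGen.tail hwQ ht⟩

lemma dseq_step {f : ℕ → Term} {M Q : Term} {n : ℕ} {X Y X' Y' : Term}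
    (h1 : dseq f M Q n = some (X, Y)) (h2 : dseq f M Q (n + 1) = some (X', Y')) :
    (Y' = Y ∧ Tau X X') ∨ (X' = X ∧ Tau Y Y') := by
  rw [dseq, h1, Option.bind_some] at h2
  rcases pstep_some h2 with ⟨he, _, ht⟩ | ⟨he, _, ht⟩
  · exact Or.inl ⟨he, ht⟩
  · exact Or.inr ⟨he, ht⟩

/-- Extract an honest τ-sequence from a sequence which does τ-steps on an
infinite set of positions and is constant elsewhere. -/
lemma extract {u : ℕ → Term} {A : Set ℕ} (hA : A.Infinite)
    (hstep : ∀ n ∈ A, Tau (u n) (u (n + 1)))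
    (hconst : ∀ n, n ∉ A → u (n + 1) = u n) :
    ∃ e : ℕ → ℕ, (∀ j, j ≤ e j) ∧ u (e 0) = u 0 ∧ TauSeq (fun j => u (e j)) := by
  have hnext : ∀ m : ℕ, ∃ n, m ≤ n ∧ n ∈ A := by
    intro m
    obtain ⟨b, hb, hmb⟩ := hA.exists_gt m
    exact ⟨b, le_of_lt hmb, hb⟩
  let nextA : ℕ → ℕ := fun m => Nat.find (hnext m)
  have hnext_ge : ∀ m, m ≤ nextA m := fun m => (Nat.find_spec (hnext m)).1
  have hnext_mem : ∀ m, nextA m ∈ A := fun m => (Nat.find_spec (hnext m)).2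
  have hnext_min : ∀ m l, m ≤ l → l < nextA m → l ∉ A := by
    intro m l hml hl hlA
    exact Nat.find_min (hnext m) hl ⟨hml, hlA⟩
  -- u is constant on gaps
  have hconst' : ∀ a k, (∀ m, a ≤ m → m < a + k → m ∉ A) → u (a + k) = u a := by
    intro a k
    induction k with
    | zero => intro _; rfl
    | succ k ih =>
        intro hgap
        have h1 : u (a + k + 1) = u (a + k) :=
          hconst _ (hgap _ (Nat.le_add_right a k) (by omega))
        have h2 := ih (fun m hm hm2 => hgap m hm (by omega))
        calc u (a + (k+1)) = u (a + k + 1) := by ring_nf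
        _ = u a := by rw [h1, h2]
  have hconstB : ∀ a b, a ≤ b → (∀ m, a ≤ m → m < b → m ∉ A) → u b = u a := by
    intro a b hab hgap
    have : b = a + (b - a) := by omega
    rw [this]
    exact hconst' a (b - a) (fun m hm hm2 => hgap m hm (by omega))
  refine ⟨fun j => Nat.rec (nextA 0) (fun _ ej => nextA (ej + 1)) j, ?_, ?_, ?_⟩
  · intro j
    induction j with
    | zero => exact Nat.zero_le _
    | succ j ih =>
        have ih' : j ≤ (Nat.rec (nextA 0) (fun _ ej => nextA (ej + 1)) j : ℕ) := ih
        have h2 := hnext_ge (Nat.rec (nextA 0) (fun _ ej => nextA (ej + 1)) j + 1)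
        show j + 1 ≤ nextA (Nat.rec (nextA 0) (fun _ ej => nextA (ej + 1)) j + 1)
        omega
  · exact hconstB 0 (nextA 0) (Nat.zero_le _) (fun m hm hm2 => hnext_min 0 m hm hm2)
  · intro j
    simp only []
    set ej : ℕ := Nat.rec (nextA 0) (fun _ ej => nextA (ej + 1)) j with hej
    have hmem : ej ∈ A := by
      cases j with
      | zero => exact hnext_mem 0
      | succ j => exact hnext_mem _
    have heq : u (nextA (ej + 1)) = u (ej + 1) :=
      hconstB (ej + 1) (nextA (ej + 1)) (hnext_ge _)
        (fun m hm hm2 => hnext_min _ m hm hm2)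
    show Tau (u ej) (u (Nat.rec (nextA 0) (fun _ ej => nextA (ej + 1)) (j+1)))
    have : (Nat.rec (nextA 0) (fun _ ej => nextA (ej + 1)) (j+1) : ℕ) = nextA (ej + 1) := rfl
    rw [this, heq]
    exact hstep ej hmem

end Codiv


section CodivMain

open scoped Classical

instance : Nonempty Term := ⟨Term.nil⟩

/-- Codivergence of the closure `Cl`. -/
lemma cl_codiv : ∀ {P Q : Term}, Cl P Q → ∀ f : ℕ → Term, f 0 = Q → TauSeq f →
    ∃ k, 1 ≤ k ∧ ∃ P', TauWeak P P' ∧ Cl P' (f k) := by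
  intro P Q h
  induction h with
  | @base P Q h =>
      intro f hf0 hfs
      obtain ⟨k, hk, P', hP', hrel⟩ := ((piBisimilar_good.2.1 P Q h).1) f hf0 hfs
      exact ⟨k, hk, P', hP', Cl.base hrel⟩
  | @rfl P h =>
      intro f hf0 hfs
      subst hf0
      refine ⟨1, le_refl 1, f 1, ⟨f 1, hfs 0, ReflTransGen.refl⟩, Cl.rfl ?_⟩
      exact step_closed (hfs 0) h
  | @res P Q c hPQ ih =>
      intro f hf0 hfs
      have resinv : ∀ {X Z : Term}, Tau (.res c X) Z → ∃ X', Z = Term.res c X' ∧ Tau X X' := by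
        intro X Z hz
        cases hz with
        | resStep h hn => exact ⟨_, rfl, h⟩
      let g : ℕ → Term := fun n => Nat.rec Q
        (fun n Xn => Classical.epsilon (fun X' => f (n + 1) = Term.res c X' ∧ Tau Xn X')) n
      have key : ∀ n, f n = Term.res c (g n) := by
        intro n
        induction n with
        | zero => rw [hf0]; rfl
        | succ n ih' =>
            have hstep := hfs n
            rw [ih'] at hstep
            exact (Classical.epsilon_spec (resinv hstep)).1
      have keyT : TauSeq g := by
        intro n
        have hstep := hfs n
        rw [key n] at hstep
        exact (Classical.epsilon_spec (resinv hstep)).2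
      obtain ⟨k, hk, P', hTW, hc⟩ := ih g rfl keyT
      refine ⟨k, hk, .res c P', tauWeak_res c hTW, ?_⟩
      rw [key k]
      exact Cl.res c hc
  | @par L M P Q hLM hPQ ihLM ihPQ =>
      intro f hf0 hfs
      by_cases hex : ∃ n, dseq f M Q n = none
      · -- a communication or close occurs
        have hN : dseq f M Q (Nat.find hex) = none := Nat.find_spec hex
        have hN0 : Nat.find hex ≠ 0 := by
          intro h0
          rw [h0] at hN
          simp [dseq] at hN
        obtain ⟨n, hn⟩ : ∃ n, Nat.find hex = n + 1 := ⟨Nat.find hex - 1, by omega⟩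
        rw [hn] at hN
        have hdn : dseq f M Q n ≠ none := Nat.find_min hex (by omega)
        obtain ⟨⟨X, Y⟩, hXY⟩ : ∃ XY, dseq f M Q n = some XY :=
          Option.ne_none_iff_exists'.1 hdn
        obtain ⟨hfn, hwM, hwQ⟩ := dseq_inv hf0 hfs n X Y hXY
        have hps : pstep (f (n + 1)) X Y = none := by
          rw [dseq, hXY, Option.bind_some] at hN
          exact hN
        have htau : Tau (.par X Y) (f (n + 1)) := by rw [← hfn]; exact hfs n
        obtain ⟨L₁, hwL1, cL⟩ := cl_track hLM hwM
        obtain ⟨P₁, hwP1, cP⟩ := cl_track hPQ hwQ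
        rcases pstep_none htau hps with ⟨a, b, X', Y', hX, hY, hfeq⟩ |
          ⟨a, b, X', Y', hX, hY, hfeq⟩ | ⟨a, c, X', Y', hX, hY, hfeq⟩ |
          ⟨a, c, X', Y', hX, hY, hfeq⟩
        · obtain ⟨L'', L₂, hwL2, hsL, cL1, cL2⟩ := (cl_match cL _ _ hX).2 _ rfl
          obtain ⟨P'', P₂, hwP2, hsP, cP1, cP2⟩ := (cl_match cP _ _ hY).2 _ rfl
          refine ⟨n + 1, by omega, .par L₂ P₂, ?_, ?_⟩
          · exact tauWeak_of_weak_tau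
              (weakTau_trans (weakTau_par hwL1 hwP1) (weakTau_par hwL2 hwP2))
              (Step.commL hsL hsP)
          · rw [hfeq]; exact Cl.par cL2 cP2
        · obtain ⟨L'', L₂, hwL2, hsL, cL1, cL2⟩ := (cl_match cL _ _ hX).2 _ rfl
          obtain ⟨P'', P₂, hwP2, hsP, cP1, cP2⟩ := (cl_match cP _ _ hY).2 _ rfl
          refine ⟨n + 1, by omega, .par L₂ P₂, ?_, ?_⟩
          · exact tauWeak_of_weak_tau
              (weakTau_trans (weakTau_par hwL1 hwP1) (weakTau_par hwL2 hwP2))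
              (Step.commR hsL hsP)
          · rw [hfeq]; exact Cl.par cL2 cP2
        · obtain ⟨L'', L₂, hwL2, hsL, cL1, cL2⟩ := (cl_match cL _ _ hX).2 _ rfl
          obtain ⟨P'', P₂, hwP2, hsP, cP1, cP2⟩ := (cl_match cP _ _ hY).2 _ rfl
          refine ⟨n + 1, by omega, .res c (.par L₂ P₂), ?_, ?_⟩
          · exact tauWeak_of_weak_tau
              (weakTau_trans (weakTau_par hwL1 hwP1) (weakTau_par hwL2 hwP2))
              (Step.closeL hsL hsP)
          · rw [hfeq]; exact Cl.res c (Cl.par cL2 cP2)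
        · obtain ⟨L'', L₂, hwL2, hsL, cL1, cL2⟩ := (cl_match cL _ _ hX).2 _ rfl
          obtain ⟨P'', P₂, hwP2, hsP, cP1, cP2⟩ := (cl_match cP _ _ hY).2 _ rfl
          refine ⟨n + 1, by omega, .res c (.par L₂ P₂), ?_, ?_⟩
          · exact tauWeak_of_weak_tau
              (weakTau_trans (weakTau_par hwL1 hwP1) (weakTau_par hwL2 hwP2))
              (Step.closeR hsL hsP)
          · rw [hfeq]; exact Cl.res c (Cl.par cL2 cP2)
      · -- purely interleaved divergence
        push_neg at hex
        have hall : ∀ n, ∃ X Y, dseq f M Q n = some (X, Y) := by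
          intro n
          obtain ⟨⟨X, Y⟩, h⟩ := Option.ne_none_iff_exists'.1 (hex n)
          exact ⟨X, Y, h⟩
        choose g h' hg using hall
        have hg0 : g 0 = M ∧ h' 0 = Q := by
          have h0 : (some (M, Q) : Option (Term × Term)) = some (g 0, h' 0) := (hg 0)
          have := Option.some.inj h0
          exact ⟨(congrArg Prod.fst this).symm, (congrArg Prod.snd this).symm⟩
        have hinv : ∀ n, f n = Term.par (g n) (h' n) ∧ WeakTau M (g n) ∧ WeakTau Q (h' n) :=
          fun n => dseq_inv hf0 hfs n _ _ (hg n)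
        have hstepd : ∀ n, (h' (n + 1) = h' n ∧ Tau (g n) (g (n + 1))) ∨
            (g (n + 1) = g n ∧ Tau (h' n) (h' (n + 1))) :=
          fun n => dseq_step (hg n) (hg (n + 1))
        set S : Set ℕ := {n | Tau (g n) (g (n + 1)) ∧ h' (n + 1) = h' n} with hSdef
        have hSc : ∀ n, n ∉ S → g (n + 1) = g n ∧ Tau (h' n) (h' (n + 1)) := by
          intro n hn
          rcases hstepd n with ⟨h1, h2⟩ | hr
          · exact absurd ⟨h2, h1⟩ hn
          · exact hr
        by_cases hSinf : S.Infinite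
        · obtain ⟨e, hje, he0, hts⟩ :=
            extract (u := g) hSinf (fun n hn => hn.1) (fun n hn => (hSc n hn).1)
          have hg0' : g (e 0) = M := by rw [he0, hg0.1]
          obtain ⟨j, hj, L', hTW, hcl⟩ := ihLM (fun j => g (e j)) hg0' hts
          obtain ⟨P₁, hwP, cP⟩ := cl_track hPQ (hinv (e j)).2.2
          refine ⟨e j, by have := hje j; omega, .par L' P₁, tauWeak_parL hTW hwP, ?_⟩
          rw [(hinv (e j)).1]
          exact Cl.par hcl cP
        · have hTinf : Sᶜ.Infinite := by
            by_contra hfin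
            have hfin2 : (S ∪ Sᶜ).Finite :=
              Set.Finite.union (Set.not_infinite.1 hSinf) (Set.not_infinite.1 hfin)
            rw [Set.union_compl_self] at hfin2
            exact Set.infinite_univ hfin2
          obtain ⟨e, hje, he0, hts⟩ :=
            extract (u := h') hTinf (fun n hn => (hSc n hn).2)
              (fun n hn => ((not_not.1 hn : n ∈ S)).2)
          have hq0 : h' (e 0) = Q := by rw [he0, hg0.2]
          obtain ⟨j, hj, P₁, hTW, hcP⟩ := ihPQ (fun j => h' (e j)) hq0 hts
          obtain ⟨L₁, hwL, cL⟩ := cl_track hLM (hinv (e j)).2.1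
          refine ⟨e j, by have := hje j; omega, .par L₁ P₁, tauWeak_parR hwL hTW, ?_⟩
          rw [(hinv (e j)).1]
          exact Cl.par cL hcP

/-- `Cl` qualifies for the absolute equality. -/
lemma cl_goodAbs : GoodAbs Cl := by
  refine ⟨cl_onProc, ?_, ?_, ⟨?_, ?_⟩, ?_, ?_⟩
  · intro P h
    exact Cl.rfl h
  · -- equipollent
    intro P Q h
    have main : ∀ {A B : Term}, Cl A B → Obs B → Obs A := by
      intro A B hc hobs
      obtain ⟨B₁, ℓ, B₂, hw, hs⟩ := hobs
      obtain ⟨A₁, hwA, hc₁⟩ := cl_track hc hw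
      obtain ⟨A'', A₂, hw2, hs2, _, _⟩ := (cl_match hc₁ _ _ hs).2 ℓ rfl
      exact ⟨A'', ℓ, A₂, weakTau_trans hwA hw2, hs2⟩
    exact ⟨fun ho => main (cl_symm h) ho, fun ho => main h ho⟩
  · intro L M P Q h1 h2
    exact Cl.par h1 h2
  · intro P Q c h
    exact Cl.res c h
  · -- codivergent
    intro P Q h
    exact ⟨fun f hf0 hfs => cl_codiv h f hf0 hfs,
      fun f hf0 hfs => cl_codiv (cl_symm h) f hf0 hfs⟩
  · -- bisimulation
    intro P Q h
    constructor
    · intro Q' hQ'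
      exact (cl_match h _ _ hQ').1 rfl
    · intro P' hP'
      rcases (cl_match (cl_symm h) _ _ hP').1 rfl with ⟨Q', hw, r1, r2⟩ |
        ⟨Q'', Q', hw, r1, ht, r2⟩
      · exact Or.inl ⟨Q', hw, cl_symm r1, cl_symm r2⟩
      · exact Or.inr ⟨Q'', Q', hw, cl_symm r1, ht, cl_symm r2⟩

end CodivMain

/-- the π-bisimilarity is contained in the absolute equality. -/
theorem pi_bisimilarity_subset_absolute_equality :
    ∀ P Q : Term, PiBisimilar P Q → AbsEq P Q := by
  intro P Q h
  exact ⟨Cl, cl_goodAbs, Cl.base h⟩
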